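/- If G is interval colorable, then the chromatic index of G equals its maximum degree Δ(G). -/

import Mathlib

/-- The set of colors on edges incident to `v` (the spectrum of `v`). -/
def Spectrum {V : Type*} (G : SimpleGraph V) (c : G.edgeSet → ℕ) (v : V) : Set ℕ :=
  {k | ∃ e : G.edgeSet, v ∈ (e : Sym2 V) ∧ c e = k}

/-- `c` is an interval `t`-coloring of `G`: a proper edge-coloring with colors
`1,…,t`, all colors used, and each vertex's spectrum an interval of integers. -/
def IsIntervalColoring {V : Type*} (G : SimpleGraph V) (t : ℕ) (c : G.edgeSet → ℕ) : Prop :=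
  (∀ e, 1 ≤ c e ∧ c e ≤ t) ∧
  (∀ k, 1 ≤ k → k ≤ t → ∃ e, c e = k) ∧
  (∀ e₁ e₂ : G.edgeSet, e₁ ≠ e₂ → (∃ v, v ∈ (e₁ : Sym2 V) ∧ v ∈ (e₂ : Sym2 V)) →
    c e₁ ≠ c e₂) ∧
  (∀ v : V, ∃ a b : ℕ, Spectrum G c v = Set.Icc a b)

/-- Which part of the tripartition a vertex belongs to. -/
def tripart (m n : ℕ) : Fin 1 ⊕ Fin m ⊕ Fin n → Fin 3
  | .inl _ => 0
  | .inr (.inl _) => 1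
  | .inr (.inr _) => 2

/-- The complete tripartite graph `K_{1,m,n}`. -/
def K1mn (m n : ℕ) : SimpleGraph (Fin 1 ⊕ Fin m ⊕ Fin n) where
  Adj a b := tripart m n a ≠ tripart m n b
  symm := ⟨fun _ _ h => h.symm⟩
  loopless := ⟨fun _ h => h rfl⟩

lemma mod_ne_of_close {a b x y d : ℕ} (hx : x ∈ Set.Icc a b) (hy : y ∈ Set.Icc a b)
    (hx1 : 1 ≤ x) (hy1 : 1 ≤ y) (hxy : x ≠ y) (hd : b + 1 - a ≤ d) :
    (x - 1) % d ≠ (y - 1) % d := by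
  intro hmod
  simp only [Set.mem_Icc] at hx hy
  rcases Nat.lt_or_ge x y with hlt | hge
  · have hpos : 0 < (y - 1) - (x - 1) := by omega
    have hdvd : d ∣ (y - 1) - (x - 1) := (Nat.modEq_iff_dvd' (by omega)).mp hmod
    have := Nat.le_of_dvd hpos hdvd
    omega
  · have hlt : y < x := lt_of_le_of_ne hge (Ne.symm hxy)
    have hpos : 0 < (x - 1) - (y - 1) := by omega
    have hdvd : d ∣ (x - 1) - (y - 1) := (Nat.modEq_iff_dvd' (by omega)).mp hmod.symm
    have := Nat.le_of_dvd hpos hdvd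
    omega

lemma icc_card_le_degree {V : Type*} [Fintype V] (G : SimpleGraph V) [DecidableRel G.Adj]
    (c : G.edgeSet → ℕ) (v : V) (a b : ℕ) (hspec : Spectrum G c v = Set.Icc a b)
    (e₀ : G.edgeSet) : b + 1 - a ≤ G.degree v := by
  classical
  have key : (Finset.Icc a b).card ≤ (G.incidenceFinset v).card := by
    apply Finset.card_le_card_of_injOn
      (fun k => if h : ∃ e : G.edgeSet, v ∈ (e : Sym2 V) ∧ c e = k
        then ((Classical.choose h : G.edgeSet) : Sym2 V) else (e₀ : Sym2 V))
    · intro k hk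
      have hE : ∃ e : G.edgeSet, v ∈ (e : Sym2 V) ∧ c e = k := by
        have : k ∈ Spectrum G c v := by rw [hspec]; simpa using hk
        exact this
      simp only [dif_pos hE]
      rw [Finset.mem_coe, SimpleGraph.mem_incidenceFinset]
      exact ⟨(Classical.choose hE).2, (Classical.choose_spec hE).1⟩
    · intro k hk k' hk' heq
      have hE : ∃ e : G.edgeSet, v ∈ (e : Sym2 V) ∧ c e = k := by
        have : k ∈ Spectrum G c v := by rw [hspec]; simpa using hk
        exact this
      have hE' : ∃ e : G.edgeSet, v ∈ (e : Sym2 V) ∧ c e = k' := by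
        have : k' ∈ Spectrum G c v := by rw [hspec]; simpa using hk'
        exact this
      simp only [dif_pos hE, dif_pos hE'] at heq
      have : Classical.choose hE = Classical.choose hE' := Subtype.ext heq
      rw [← (Classical.choose_spec hE).2, ← (Classical.choose_spec hE').2, this]
  rwa [Nat.card_Icc, SimpleGraph.card_incidenceFinset_eq_degree] at key

open scoped Classical in
theorem stmt_15 {V : Type*} [Fintype V] (G : SimpleGraph V) [DecidableRel G.Adj]
    (h : ∃ (t : ℕ) (c : G.edgeSet → ℕ), 0 < t ∧ IsIntervalColoring G t c) :
    sInf {k : ℕ | ∃ c : G.edgeSet → ℕ, (∀ e, 1 ≤ c e ∧ c e ≤ k) ∧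
        ∀ e₁ e₂ : G.edgeSet, e₁ ≠ e₂ →
          (∃ v, v ∈ (e₁ : Sym2 V) ∧ v ∈ (e₂ : Sym2 V)) → c e₁ ≠ c e₂}
      = G.maxDegree := by
  obtain ⟨t, c, ht, hc⟩ := h
  set Δ := G.maxDegree with hΔ
  -- membership: Δ is in the set
  have hmem : Δ ∈ {k : ℕ | ∃ c : G.edgeSet → ℕ, (∀ e, 1 ≤ c e ∧ c e ≤ k) ∧
      ∀ e₁ e₂ : G.edgeSet, e₁ ≠ e₂ →
        (∃ v, v ∈ (e₁ : Sym2 V) ∧ v ∈ (e₂ : Sym2 V)) → c e₁ ≠ c e₂} := by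
    rcases isEmpty_or_nonempty G.edgeSet with hE | hE
    · exact ⟨fun e => 1, fun e => hE.elim e, fun e₁ => hE.elim e₁⟩
    · obtain ⟨e₀⟩ := hE
      -- Δ ≥ 1
      have hΔ1 : 1 ≤ Δ := by
        obtain ⟨u, w, huw⟩ : ∃ u w, G.Adj u w := by
          obtain ⟨e, he⟩ := e₀
          induction e with
          | h u w => exact ⟨u, w, he⟩
        have h1 : 0 < G.degree u := by
          rw [G.degree_pos_iff_exists_adj]; exact ⟨w, huw⟩
        exact h1.trans_le (G.degree_le_maxDegree u)
      refine ⟨fun e => (c e - 1) % Δ + 1, fun e => ⟨le_add_self, ?_⟩, ?_⟩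
      · show (c e - 1) % Δ + 1 ≤ Δ
        have := Nat.mod_lt (c e - 1) (show 0 < Δ by omega)
        omega
      · intro e₁ e₂ hne ⟨v, hv₁, hv₂⟩
        obtain ⟨a, b, hspec⟩ := hc.2.2.2 v
        have hcb : b + 1 - a ≤ Δ :=
          (icc_card_le_degree G c v a b hspec e₁).trans (G.degree_le_maxDegree v)
        have h1 : c e₁ ∈ Set.Icc a b := by
          rw [← hspec]; exact ⟨e₁, hv₁, rfl⟩
        have h2 : c e₂ ∈ Set.Icc a b := by
          rw [← hspec]; exact ⟨e₂, hv₂, rfl⟩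
        have hne' : c e₁ ≠ c e₂ := hc.2.2.1 e₁ e₂ hne ⟨v, hv₁, hv₂⟩
        have := mod_ne_of_close h1 h2 (hc.1 e₁).1 (hc.1 e₂).1 hne' hcb
        show (c e₁ - 1) % Δ + 1 ≠ (c e₂ - 1) % Δ + 1
        omega
  -- lower bound
  have hlow : ∀ k ∈ {k : ℕ | ∃ c : G.edgeSet → ℕ, (∀ e, 1 ≤ c e ∧ c e ≤ k) ∧
      ∀ e₁ e₂ : G.edgeSet, e₁ ≠ e₂ →
        (∃ v, v ∈ (e₁ : Sym2 V) ∧ v ∈ (e₂ : Sym2 V)) → c e₁ ≠ c e₂}, Δ ≤ k := by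
    intro k hk
    obtain ⟨c', hb, hp⟩ := hk
    rcases isEmpty_or_nonempty V with hV | hV
    · have : Δ = 0 := by
        simp only [hΔ, SimpleGraph.maxDegree, Finset.univ_eq_empty, Finset.image_empty,
          Finset.max_empty]
        rfl
      omega
    · obtain ⟨v, hv⟩ := G.exists_maximal_degree_vertex
      rw [hΔ, hv, ← SimpleGraph.card_incidenceFinset_eq_degree]
      have : (G.incidenceFinset v).card ≤ (Finset.Icc 1 k).card := by
        apply Finset.card_le_card_of_injOn
          (fun e => if h : e ∈ G.edgeSet then c' ⟨e, h⟩ else 0)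
        · intro e he
          rw [Finset.mem_coe, SimpleGraph.mem_incidenceFinset] at he
          simp only [dif_pos he.1]
          have := hb ⟨e, he.1⟩
          simp only [Finset.mem_coe, Finset.mem_Icc]
          exact this
        · intro e he e' he' heq
          rw [Finset.mem_coe, SimpleGraph.mem_incidenceFinset] at he he'
          simp only [dif_pos he.1, dif_pos he'.1] at heq
          by_contra hne
          exact hp ⟨e, he.1⟩ ⟨e', he'.1⟩ (fun h => hne (congrArg Subtype.val h))
            ⟨v, he.2, he'.2⟩ heq
      rwa [Nat.card_Icc, Nat.add_sub_cancel] at this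
  exact le_antisymm (Nat.sInf_le hmem) (le_csInf ⟨Δ, hmem⟩ hlow)
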